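/- arXiv:2605.10870 — 5 statements merged into one kernel-verified Lean document; each statement's English description precedes it below -/
import Mathlib

section
/- Memory-state cardinality lower bound: fix ε ≥ 0, let P ⊆ X be a 2ε-packing (d_dec(h,h') > 2ε for all distinct h, h' ∈ P), let M be a finite set of memory states, let κ assign to each h ∈ P a probability mass function κ(h) on M, and let a : M → A be a decision rule such that Δ(h, a(m)) ≤ ε whenever h ∈ P and κ(h)(m) > 0. Then the number of memory states reached with positive probability, |{m ∈ M : ∃ h ∈ P, κ(h)(m) > 0}|, is at least |P|. -/
open Finset
open scoped Classical

/-- The optimal value `μ*(h) = max_{a ∈ A} μ(h,a)`. -/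
noncomputable def mustar {X A : Type*} [Fintype A] [Nonempty A]
    (μ : X → A → ℝ) (h : X) : ℝ :=
  univ.sup' univ_nonempty (μ h)

/-- The suboptimality gap `Δ(h,a) = μ*(h) - μ(h,a)`. -/
noncomputable def gap {X A : Type*} [Fintype A] [Nonempty A]
    (μ : X → A → ℝ) (h : X) (a : A) : ℝ :=
  mustar μ h - μ h a

/-- The pairwise decision distance `d_dec(h,h') = min_a max{Δ(h,a), Δ(h',a)}`. -/
noncomputable def dDec {X A : Type*} [Fintype A] [Nonempty A]
    (μ : X → A → ℝ) (h h' : X) : ℝ :=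
  univ.inf' univ_nonempty (fun a => max (gap μ h a) (gap μ h' a))

/-- Memory-state cardinality lower bound: under the hypotheses of support
separation, the number of memory states reached with positive probability is
at least `|P|`. -/
theorem memory_state_cardinality_lower_bound {X A M : Type*}
    [Fintype X] [Nonempty X] [Fintype A] [Nonempty A] [Fintype M]
    (μ : X → A → ℝ) (hμ : ∀ x a, μ x a ∈ Set.Icc (0 : ℝ) 1)
    (ε : ℝ) (hε : 0 ≤ ε)
    (P : Finset X)
    (hpack : ∀ h ∈ P, ∀ h' ∈ P, h ≠ h' → 2 * ε < dDec μ h h')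
    (κ : X → M → ℝ)
    (hκ0 : ∀ h ∈ P, ∀ m : M, 0 ≤ κ h m)
    (hκ1 : ∀ h ∈ P, ∑ m : M, κ h m = 1)
    (a : M → A)
    (hgood : ∀ h ∈ P, ∀ m : M, 0 < κ h m → gap μ h (a m) ≤ ε) :
    P.card ≤ (univ.filter fun m : M => ∃ h ∈ P, 0 < κ h m).card := by
  have hpick : ∀ h ∈ P, ∃ m : M, 0 < κ h m := by
    intro h hP
    by_contra hc
    push_neg at hc
    have : ∑ m : M, κ h m = 0 := by
      apply Finset.sum_eq_zero
      intro m _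
      exact le_antisymm (hc m) (hκ0 h hP m)
    rw [hκ1 h hP] at this
    norm_num at this
  choose f hf using hpick
  rcases P.eq_empty_or_nonempty with hPe | ⟨h0, h0P⟩
  · simp [hPe]
  haveI : Nonempty M := ⟨f h0 h0P⟩
  apply Finset.card_le_card_of_injOn (fun h => if hh : h ∈ P then f h hh else Classical.arbitrary M)
  · intro h hP
    simp only [Finset.mem_coe] at hP ⊢
    simp only [Finset.mem_filter, Finset.mem_univ, true_and, dif_pos hP]
    exact ⟨h, hP, hf h hP⟩
  · intro h hP h' hP' heq
    simp only [Finset.mem_coe] at hP hP'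
    simp only [dif_pos hP, dif_pos hP'] at heq
    by_contra hne
    have h1 := hgood h hP (f h hP) (hf h hP)
    have h2 := hgood h' hP' (f h' hP') (hf h' hP')
    rw [heq] at h1
    have hd : dDec μ h h' ≤ max (gap μ h (a (f h' hP'))) (gap μ h' (a (f h' hP'))) :=
      Finset.inf'_le _ (Finset.mem_univ _)
    have := hpack h hP h' hP' hne
    have : 2 * ε < ε := lt_of_lt_of_le this (hd.trans (max_le h1 h2))
    linarith
end

section
/- Set-cover reduction for optimal memory: let U be a nonempty finite universe and S_1, …, S_A ⊆ U a family of subsets whose union is U (every element belongs to at least one set). Define the memory instance with history set X = U, one action a_j per set S_j, and reward μ(u, a_j) = 1 if u ∈ S_j and μ(u, a_j) = 0 otherwise. Then for every integer K ≥ 1 and every ε with 0 ≤ ε < 1: ε*∞(K) ≤ ε holds if and only if there exist indices j_1, …, j_K with S_{j_1} ∪ ⋯ ∪ S_{j_K} = U. -/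
open Finset

/-- The worst-case `K`-state distortion frontier `ε*∞(K)`. -/
noncomputable def epsStar {X A : Type*} [Fintype X] [Nonempty X] [Fintype A] [Nonempty A]
    (μ : X → A → ℝ) (K : ℕ) : ℝ :=
  sInf {r : ℝ | ∃ (g : X → Fin K) (π : Fin K → A),
    r = univ.sup' univ_nonempty (fun h => gap μ h (π (g h)))}

/-- Set-cover reduction for optimal memory: with histories `U`, one action per
set `S a`, and reward `μ(u,a) = 1` iff `u ∈ S a`, for every `K ≥ 1` and
`0 ≤ ε < 1` we have `ε*∞(K) ≤ ε` iff some `K` of the sets cover `U`. -/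
theorem set_cover_reduction {U A : Type*}
    [Fintype U] [Nonempty U] [DecidableEq U] [Fintype A] [Nonempty A]
    (S : A → Finset U) (hcover : ∀ u : U, ∃ a : A, u ∈ S a)
    (K : ℕ) (hK : 1 ≤ K) (ε : ℝ) (hε0 : 0 ≤ ε) (hε1 : ε < 1) :
    epsStar (fun (u : U) (a : A) => if u ∈ S a then (1 : ℝ) else 0) K ≤ ε ↔
      ∃ j : Fin K → A, ∀ u : U, ∃ i : Fin K, u ∈ S (j i) := by
  set μ : U → A → ℝ := fun u a => if u ∈ S a then (1 : ℝ) else 0 with hμ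
  have hmustar : ∀ u : U, mustar μ u = 1 := by
    intro u
    apply le_antisymm
    · apply Finset.sup'_le
      intro a _
      simp only [μ]
      split <;> norm_num
    · obtain ⟨a, ha⟩ := hcover u
      refine le_trans ?_ (Finset.le_sup' (μ u) (Finset.mem_univ a))
      simp [μ, ha]
  have hgap : ∀ (u : U) (a : A), gap μ u a = if u ∈ S a then 0 else 1 := by
    intro u a
    simp only [gap, hmustar, μ]
    split <;> norm_num
  haveI : NeZero K := ⟨by omega⟩
  have hbdd : BddBelow {r : ℝ | ∃ (g : U → Fin K) (π : Fin K → A),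
      r = univ.sup' univ_nonempty (fun h => gap μ h (π (g h)))} := by
    refine ⟨0, ?_⟩
    rintro r ⟨g, π, rfl⟩
    obtain ⟨u⟩ := (inferInstance : Nonempty U)
    refine le_trans ?_ (Finset.le_sup' _ (Finset.mem_univ u))
    rw [hgap]; split <;> norm_num
  have hne : {r : ℝ | ∃ (g : U → Fin K) (π : Fin K → A),
      r = univ.sup' univ_nonempty (fun h => gap μ h (π (g h)))}.Nonempty := by
    obtain ⟨a⟩ := (inferInstance : Nonempty A)
    exact ⟨_, fun _ => 0, fun _ => a, rfl⟩
  constructor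
  · intro hle
    by_contra hnc
    push_neg at hnc
    have h1 : (1 : ℝ) ≤ epsStar μ K := by
      apply le_csInf hne
      rintro r ⟨g, π, rfl⟩
      obtain ⟨u, hu⟩ := hnc (fun i => π i)
      refine le_trans ?_ (Finset.le_sup' _ (Finset.mem_univ u))
      rw [hgap, if_neg (hu (g u))]
    linarith
  · rintro ⟨j, hj⟩
    refine le_trans (csInf_le hbdd ?_) hε0
    refine ⟨fun u => (hj u).choose, j, ?_⟩
    symm
    apply le_antisymm
    · exact Finset.sup'_le _ _ fun u _ => by
        rw [hgap, if_pos (hj u).choose_spec]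
    · obtain ⟨u⟩ := (inferInstance : Nonempty U)
      refine le_trans ?_ (Finset.le_sup' _ (Finset.mem_univ u))
      rw [hgap, if_pos (hj u).choose_spec]
end

section
/- Deterministic validity of distance and radius certificates: suppose LCB, UCB : X × A → [0,1] satisfy LCB(x,a) ≤ μ(x,a) ≤ UCB(x,a) for all x ∈ X and a ∈ A. Define UCB*(x) = max_a UCB(x,a), LCB*(x) = max_a LCB(x,a), the upper and lower gap bounds Δ̄(x,a) = UCB*(x) − LCB(x,a) and Δ̲(x,a) = LCB*(x) − UCB(x,a), the pairwise certificates d̄(x,x') = min_a max{Δ̄(x,a), Δ̄(x',a)} and d̲(x,x') = min_a max{Δ̲(x,a), Δ̲(x',a)}, and the cluster certificates ρ̄(C) = min_a max_{x ∈ C} Δ̄(x,a) and ρ̲(C) = min_a max_{x ∈ C} Δ̲(x,a). Then for all x, x' ∈ X and all nonempty C ⊆ X: d̲(x,x') ≤ d_dec(x,x') ≤ d̄(x,x') and ρ̲(C) ≤ ρ_dec(C) ≤ ρ̄(C). -/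
open Finset

/-- The cluster decision radius `ρ_dec(C) = min_{a} max_{h ∈ C} Δ(h,a)`. -/
noncomputable def rhoDec {X A : Type*} [Fintype A] [Nonempty A]
    (μ : X → A → ℝ) (C : Finset X) (hC : C.Nonempty) : ℝ :=
  univ.inf' univ_nonempty (fun a => C.sup' hC (fun h => gap μ h a))

/-- Upper gap bound `Δ̄(x,a) = UCB*(x) - LCB(x,a)`. -/
noncomputable def gapUpper {X A : Type*} [Fintype A] [Nonempty A]
    (Lb Ub : X → A → ℝ) (x : X) (a : A) : ℝ :=
  univ.sup' univ_nonempty (Ub x) - Lb x a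

/-- Lower gap bound `Δ̲(x,a) = LCB*(x) - UCB(x,a)`. -/
noncomputable def gapLower {X A : Type*} [Fintype A] [Nonempty A]
    (Lb Ub : X → A → ℝ) (x : X) (a : A) : ℝ :=
  univ.sup' univ_nonempty (Lb x) - Ub x a

/-- Upper pairwise certificate `d̄(x,x') = min_a max{Δ̄(x,a), Δ̄(x',a)}`. -/
noncomputable def dUpper {X A : Type*} [Fintype A] [Nonempty A]
    (Lb Ub : X → A → ℝ) (x x' : X) : ℝ :=
  univ.inf' univ_nonempty (fun a => max (gapUpper Lb Ub x a) (gapUpper Lb Ub x' a))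

/-- Lower pairwise certificate `d̲(x,x') = min_a max{Δ̲(x,a), Δ̲(x',a)}`. -/
noncomputable def dLower {X A : Type*} [Fintype A] [Nonempty A]
    (Lb Ub : X → A → ℝ) (x x' : X) : ℝ :=
  univ.inf' univ_nonempty (fun a => max (gapLower Lb Ub x a) (gapLower Lb Ub x' a))

/-- Upper cluster certificate `ρ̄(C) = min_a max_{x ∈ C} Δ̄(x,a)`. -/
noncomputable def rhoUpper {X A : Type*} [Fintype A] [Nonempty A]
    (Lb Ub : X → A → ℝ) (C : Finset X) (hC : C.Nonempty) : ℝ :=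
  univ.inf' univ_nonempty (fun a => C.sup' hC (fun x => gapUpper Lb Ub x a))

/-- Lower cluster certificate `ρ̲(C) = min_a max_{x ∈ C} Δ̲(x,a)`. -/
noncomputable def rhoLower {X A : Type*} [Fintype A] [Nonempty A]
    (Lb Ub : X → A → ℝ) (C : Finset X) (hC : C.Nonempty) : ℝ :=
  univ.inf' univ_nonempty (fun a => C.sup' hC (fun x => gapLower Lb Ub x a))

lemma my_inf'_mono_fun {α β : Type*} [SemilatticeInf α] {s : Finset β}
    (H : s.Nonempty) {f g : β → α} (h : ∀ b ∈ s, f b ≤ g b) :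
    s.inf' H f ≤ s.inf' H g :=
  Finset.le_inf' H _ fun b hb => (Finset.inf'_le f hb).trans (h b hb)

/-- Deterministic validity of distance and radius certificates: if
`LCB(x,a) ≤ μ(x,a) ≤ UCB(x,a)` pointwise, then the pairwise and cluster
certificates bracket the true decision distance and decision radius. -/
theorem certificate_validity {X A : Type*} [Fintype X] [Fintype A] [Nonempty A]
    (μ Lb Ub : X → A → ℝ)
    (hL0 : ∀ x a, 0 ≤ Lb x a) (hL1 : ∀ x a, Lb x a ≤ 1)
    (hU0 : ∀ x a, 0 ≤ Ub x a) (hU1 : ∀ x a, Ub x a ≤ 1)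
    (hμ : ∀ x a, μ x a ∈ Set.Icc (0 : ℝ) 1)
    (hLμ : ∀ x a, Lb x a ≤ μ x a) (hμU : ∀ x a, μ x a ≤ Ub x a) :
    (∀ x x' : X,
      dLower Lb Ub x x' ≤ dDec μ x x' ∧ dDec μ x x' ≤ dUpper Lb Ub x x') ∧
    (∀ (C : Finset X) (hC : C.Nonempty),
      rhoLower Lb Ub C hC ≤ rhoDec μ C hC ∧ rhoDec μ C hC ≤ rhoUpper Lb Ub C hC) := by
  have hlow : ∀ x a, gapLower Lb Ub x a ≤ gap μ x a := by
    intro x a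
    unfold gapLower gap mustar
    have h1 : univ.sup' univ_nonempty (Lb x) ≤ univ.sup' univ_nonempty (μ x) :=
      Finset.sup'_mono_fun (fun a _ => hLμ x a)
    linarith [hμU x a]
  have hup : ∀ x a, gap μ x a ≤ gapUpper Lb Ub x a := by
    intro x a
    unfold gapUpper gap mustar
    have h1 : univ.sup' univ_nonempty (μ x) ≤ univ.sup' univ_nonempty (Ub x) :=
      Finset.sup'_mono_fun (fun a _ => hμU x a)
    linarith [hLμ x a]
  constructor
  · intro x x'
    constructor
    · exact my_inf'_mono_fun univ_nonempty (fun a _ => max_le_max (hlow x a) (hlow x' a))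
    · exact my_inf'_mono_fun univ_nonempty (fun a _ => max_le_max (hup x a) (hup x' a))
  · intro C hC
    constructor
    · exact my_inf'_mono_fun univ_nonempty (fun a _ =>
        Finset.sup'_mono_fun (fun x _ => hlow x a))
    · exact my_inf'_mono_fun univ_nonempty (fun a _ =>
        Finset.sup'_mono_fun (fun x _ => hup x a))
end

section
/- Approximation bridge for slot-based memory: let D be a probability mass function on X, and consider a joint distribution of a random context Xᵣ with law D and a random implemented action A_impl taking values in A (A_impl may depend on Xᵣ and extra randomness). Let g* : X → {1,…,K} and a*_1, …, a*_K ∈ A be a comparator satisfying μ*(x) − μ(x, a*_{g*(x)}) ≤ ε̄ for every x ∈ X, and let e : X → {1,…,K} be a router with Pr[e(Xᵣ) ≠ g*(Xᵣ)] ≤ η_route. Assume additionally that either Pr[e(Xᵣ) = g*(Xᵣ)] = 0 or the conditional expectation E[μ(Xᵣ, a*_{g*(Xᵣ)}) − μ(Xᵣ, A_impl) | e(Xᵣ) = g*(Xᵣ)] ≤ η_read with η_read ≥ 0. Then E[μ*(Xᵣ) − μ(Xᵣ, A_impl)] ≤ ε̄ + η_route + η_read. In particular, taking the comparator to be an optimal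 K-state rule with ε̄ = ε*∞(K) gives E[μ*(Xᵣ) − μ(Xᵣ, A_impl)] ≤ ε*∞(K) + η_route + η_read. -/
open Finset
open scoped Classical

/-- Approximation bridge for slot-based memory: on a finite probability space
`(Ω, p)` carrying a random context `Xr` with law `D` and an implemented random
action `Aimpl`, if a comparator `(g*, a*)` has pointwise distortion at most
`ε̄`, the router disagrees with `g*` with probability at most `η_route`, and
either the agreement event is null or the conditional expected extra loss on
agreement is at most `η_read ≥ 0`, then the expected distortion of the
implemented agent is at most `ε̄ + η_route + η_read`. -/
theorem approximation_bridge {X A Ω : Type*}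
    [Fintype X] [Nonempty X] [Fintype A] [Nonempty A] [Fintype Ω]
    (μ : X → A → ℝ) (hμ : ∀ x a, μ x a ∈ Set.Icc (0 : ℝ) 1)
    (p : Ω → ℝ) (hp0 : ∀ ω, 0 ≤ p ω) (hp1 : ∑ ω : Ω, p ω = 1)
    (D : X → ℝ) (Xr : Ω → X) (Aimpl : Ω → A)
    (hlaw : ∀ x : X, ∑ ω ∈ univ.filter (fun ω => Xr ω = x), p ω = D x)
    (K : ℕ) (gstar : X → Fin K) (astar : Fin K → A) (εbar : ℝ)
    (hcomp : ∀ x : X, mustar μ x - μ x (astar (gstar x)) ≤ εbar)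
    (e : X → Fin K) (ηroute ηread : ℝ) (hread0 : 0 ≤ ηread)
    (hroute : ∑ ω ∈ univ.filter (fun ω => e (Xr ω) ≠ gstar (Xr ω)), p ω ≤ ηroute)
    (hread :
      (∑ ω ∈ univ.filter (fun ω => e (Xr ω) = gstar (Xr ω)), p ω) = 0 ∨
      (∑ ω ∈ univ.filter (fun ω => e (Xr ω) = gstar (Xr ω)),
          p ω * (μ (Xr ω) (astar (gstar (Xr ω))) - μ (Xr ω) (Aimpl ω))) /
        (∑ ω ∈ univ.filter (fun ω => e (Xr ω) = gstar (Xr ω)), p ω) ≤ ηread) :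
    ∑ ω : Ω, p ω * (mustar μ (Xr ω) - μ (Xr ω) (Aimpl ω))
      ≤ εbar + ηroute + ηread := by

  classical
  set S := univ.filter (fun ω => e (Xr ω) = gstar (Xr ω)) with hS
  have hmu01 : ∀ x a, (0:ℝ) ≤ μ x a ∧ μ x a ≤ 1 := fun x a => ⟨(hμ x a).1, (hμ x a).2⟩
  -- key decomposition
  have hdecomp : ∀ ω : Ω,
      p ω * (mustar μ (Xr ω) - μ (Xr ω) (Aimpl ω))
      = p ω * (mustar μ (Xr ω) - μ (Xr ω) (astar (gstar (Xr ω))))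
      + p ω * (μ (Xr ω) (astar (gstar (Xr ω))) - μ (Xr ω) (Aimpl ω)) := by
    intro ω; ring
  rw [show (∑ ω : Ω, p ω * (mustar μ (Xr ω) - μ (Xr ω) (Aimpl ω)))
      = (∑ ω : Ω, p ω * (mustar μ (Xr ω) - μ (Xr ω) (astar (gstar (Xr ω)))))
      + (∑ ω : Ω, p ω * (μ (Xr ω) (astar (gstar (Xr ω))) - μ (Xr ω) (Aimpl ω)))
      from by rw [← Finset.sum_add_distrib]; exact Finset.sum_congr rfl fun ω _ => hdecomp ω]
  have h1 : (∑ ω : Ω, p ω * (mustar μ (Xr ω) - μ (Xr ω) (astar (gstar (Xr ω))))) ≤ εbar := by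
    calc (∑ ω : Ω, p ω * (mustar μ (Xr ω) - μ (Xr ω) (astar (gstar (Xr ω)))))
        ≤ ∑ ω : Ω, p ω * εbar := by
          apply Finset.sum_le_sum
          intro ω _
          exact mul_le_mul_of_nonneg_left (hcomp (Xr ω)) (hp0 ω)
      _ = εbar := by rw [← Finset.sum_mul, hp1, one_mul]
  have hsplit :
      (∑ ω : Ω, p ω * (μ (Xr ω) (astar (gstar (Xr ω))) - μ (Xr ω) (Aimpl ω)))
      = (∑ ω ∈ S, p ω * (μ (Xr ω) (astar (gstar (Xr ω))) - μ (Xr ω) (Aimpl ω)))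
      + (∑ ω ∈ univ.filter (fun ω => ¬ (e (Xr ω) = gstar (Xr ω))),
          p ω * (μ (Xr ω) (astar (gstar (Xr ω))) - μ (Xr ω) (Aimpl ω))) := by
    rw [hS, Finset.sum_filter_add_sum_filter_not]
  have hT : (∑ ω ∈ univ.filter (fun ω => ¬ (e (Xr ω) = gstar (Xr ω))),
        p ω * (μ (Xr ω) (astar (gstar (Xr ω))) - μ (Xr ω) (Aimpl ω))) ≤ ηroute := by
    calc (∑ ω ∈ univ.filter (fun ω => ¬ (e (Xr ω) = gstar (Xr ω))),
          p ω * (μ (Xr ω) (astar (gstar (Xr ω))) - μ (Xr ω) (Aimpl ω)))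
        ≤ ∑ ω ∈ univ.filter (fun ω => ¬ (e (Xr ω) = gstar (Xr ω))), p ω := by
          apply Finset.sum_le_sum
          intro ω _
          have : μ (Xr ω) (astar (gstar (Xr ω))) - μ (Xr ω) (Aimpl ω) ≤ 1 := by
            have h1 := (hmu01 (Xr ω) (astar (gstar (Xr ω)))).2
            have h2 := (hmu01 (Xr ω) (Aimpl ω)).1
            linarith
          calc p ω * (μ (Xr ω) (astar (gstar (Xr ω))) - μ (Xr ω) (Aimpl ω))
              ≤ p ω * 1 := mul_le_mul_of_nonneg_left this (hp0 ω)
            _ = p ω := mul_one _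
      _ ≤ ηroute := hroute
  have hSnn : (0:ℝ) ≤ ∑ ω ∈ S, p ω := Finset.sum_nonneg fun ω _ => hp0 ω
  have hSle1 : (∑ ω ∈ S, p ω) ≤ 1 := by
    rw [← hp1]; exact Finset.sum_le_sum_of_subset_of_nonneg (Finset.filter_subset _ _)
      (fun ω _ _ => hp0 ω)
  have hSmain : (∑ ω ∈ S, p ω * (μ (Xr ω) (astar (gstar (Xr ω))) - μ (Xr ω) (Aimpl ω)))
      ≤ ηread := by
    by_cases hz : (∑ ω ∈ S, p ω) = 0
    · have hall : ∀ ω ∈ S, p ω = 0 := by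
        intro ω hω
        exact (Finset.sum_eq_zero_iff_of_nonneg (fun ω _ => hp0 ω)).1 hz ω hω
      calc (∑ ω ∈ S, p ω * (μ (Xr ω) (astar (gstar (Xr ω))) - μ (Xr ω) (Aimpl ω)))
          = 0 := Finset.sum_eq_zero fun ω hω => by rw [hall ω hω, zero_mul]
        _ ≤ ηread := hread0
    · have hpos : (0:ℝ) < ∑ ω ∈ S, p ω := lt_of_le_of_ne hSnn (Ne.symm hz)
      rcases hread with h | h
      · exact absurd h hz
      · have := (div_le_iff₀ hpos).1 h
        calc (∑ ω ∈ S, p ω * (μ (Xr ω) (astar (gstar (Xr ω))) - μ (Xr ω) (Aimpl ω)))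
            ≤ ηread * (∑ ω ∈ S, p ω) := this
          _ ≤ ηread * 1 := mul_le_mul_of_nonneg_left hSle1 hread0
          _ = ηread := mul_one _
  linarith [hsplit, hT, hSmain, h1]
end

section
/- Failure of the triangle inequality for the pairwise decision distance: there exist a three-element history set X = {h₁, h₂, h₃}, a two-element action set A = {a₁, a₂}, and a reward function μ : X × A → [0,1] (namely μ(h₁,a₁) = 1, μ(h₁,a₂) = 0, μ(h₂,a₁) = 1, μ(h₂,a₂) = 1, μ(h₃,a₁) = 0, μ(h₃,a₂) = 1) such that d_dec(h₁,h₂) = 0, d_dec(h₂,h₃) = 0, and d_dec(h₁,h₃) = 1; in particular d_dec(h₁,h₃) > d_dec(h₁,h₂) + d_dec(h₂,h₃), so d_dec does not satisfy the triangle inequality. -/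
open Finset

lemma sup2 (f : Fin 2 → ℝ) : univ.sup' univ_nonempty f = max (f 0) (f 1) := by
  refine le_antisymm (Finset.sup'_le _ _ fun a _ => ?_) ?_
  · fin_cases a
    · exact le_max_left _ _
    · exact le_max_right _ _
  · exact max_le (Finset.le_sup' f (mem_univ 0)) (Finset.le_sup' f (mem_univ 1))

lemma inf2 (f : Fin 2 → ℝ) : univ.inf' univ_nonempty f = min (f 0) (f 1) := by
  refine le_antisymm ?_ (Finset.le_inf' _ _ fun a _ => ?_)
  · exact le_min (Finset.inf'_le f (mem_univ 0)) (Finset.inf'_le f (mem_univ 1))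
  · fin_cases a
    · exact min_le_left _ _
    · exact min_le_right _ _

/-- Failure of the triangle inequality for the pairwise decision distance:
on a three-element history set and two actions with the indicated reward matrix,
`d_dec(h₁,h₂) = 0`, `d_dec(h₂,h₃) = 0`, yet `d_dec(h₁,h₃) = 1 >`
`d_dec(h₁,h₂) + d_dec(h₂,h₃)`. -/
theorem dDec_triangle_failure :
    ∃ μ : Fin 3 → Fin 2 → ℝ,
      μ 0 0 = 1 ∧ μ 0 1 = 0 ∧
      μ 1 0 = 1 ∧ μ 1 1 = 1 ∧
      μ 2 0 = 0 ∧ μ 2 1 = 1 ∧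
      (∀ h a, μ h a ∈ Set.Icc (0 : ℝ) 1) ∧
      dDec μ 0 1 = 0 ∧ dDec μ 1 2 = 0 ∧ dDec μ 0 2 = 1 ∧
      dDec μ 0 1 + dDec μ 1 2 < dDec μ 0 2 := by
  refine ⟨![![1,0],![1,1],![0,1]], rfl, rfl, rfl, rfl, rfl, rfl, ?_, ?_, ?_, ?_, ?_⟩
  · intro h a
    fin_cases h <;> fin_cases a <;> norm_num
  all_goals simp [dDec, gap, mustar, sup2, inf2]
end
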